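/- Let C be an [n,k]_q linear code in which every nonzero codeword has the same Hamming weight d. Then every j-dimensional subcode of C has support weight d(q^j - 1)/(q^{j-1}(q-1)), for 1 ≤ j ≤ k. -/

import Mathlib

lemma ncard_eq_filter_card {α : Type*} [Fintype α] (p : α → Prop) [DecidablePred p] :
    {x | p x}.ncard = (Finset.univ.filter p).card := by
  rw [Set.ncard_eq_toFinset_card', Set.toFinset_setOf]

/-- In an `[n,k]_q` code in which every nonzero codeword has Hamming weight `d`,
every `j`-dimensional subcode (1 ≤ j ≤ k) has support weight `d(q^j-1)/(q^{j-1}(q-1))`. -/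
theorem stmt_8 {F : Type*} [Field F] [Fintype F] {n k d j : ℕ}
    (C : Submodule F (Fin n → F)) (hk : Module.finrank F C = k)
    (hconst : ∀ c ∈ C, c ≠ 0 → ({i : Fin n | c i ≠ 0}).ncard = d)
    (hj1 : 1 ≤ j) (hjk : j ≤ k)
    (D : Submodule F (Fin n → F)) (hD : D ≤ C) (hdim : Module.finrank F D = j) :
    (({i : Fin n | ∃ x ∈ D, x i ≠ 0}).ncard : ℚ) =
      (d : ℚ) * ((Fintype.card F : ℚ) ^ j - 1) /
        ((Fintype.card F : ℚ) ^ (j - 1) * ((Fintype.card F : ℚ) - 1)) := by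
  classical
  haveI : Fintype D := Fintype.ofFinite D
  haveI : Module.Finite F D := Module.Finite.of_finite
  have hq2 : 2 ≤ Fintype.card F := Fintype.one_lt_card
  have hcardD : Fintype.card D = Fintype.card F ^ j := by
    rw [← hdim]; exact Module.card_eq_pow_finrank (K := F)
  obtain ⟨S, hS⟩ : ∃ S : Finset (Fin n),
      S = Finset.univ.filter (fun i => ∃ x ∈ D, x i ≠ 0) := ⟨_, rfl⟩
  have hswap : ∑ x : D, (Finset.univ.filter (fun i : Fin n => (x : Fin n → F) i ≠ 0)).card
      = ∑ i : Fin n, (Finset.univ.filter (fun x : D => (x : Fin n → F) i ≠ 0)).card := by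
    simp only [Finset.card_filter]
    rw [Finset.sum_comm]
  have hLHS : ∑ x : D, (Finset.univ.filter (fun i : Fin n => (x : Fin n → F) i ≠ 0)).card
      = d * (Fintype.card F ^ j - 1) := by
    rw [← Finset.sum_erase_add Finset.univ _ (Finset.mem_univ (0 : D))]
    have h0 : (Finset.univ.filter
        (fun i : Fin n => ((0 : D) : Fin n → F) i ≠ 0)).card = 0 := by simp
    rw [h0, add_zero]
    have hc : ∀ x ∈ Finset.univ.erase (0 : D),
        (Finset.univ.filter (fun i : Fin n => (x : Fin n → F) i ≠ 0)).card = d := by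
      intro x hx
      have hxne : (x : Fin n → F) ≠ 0 := by
        intro h
        exact Finset.ne_of_mem_erase hx (Subtype.ext h)
      rw [← ncard_eq_filter_card]
      exact hconst (x : Fin n → F) (hD x.2) hxne
    rw [Finset.sum_congr rfl hc, Finset.sum_const,
      Finset.card_erase_of_mem (Finset.mem_univ _), Finset.card_univ, hcardD,
      smul_eq_mul, mul_comm]
  have hcoord : ∀ i ∈ S,
      (Finset.univ.filter (fun x : D => (x : Fin n → F) i ≠ 0)).card
        = Fintype.card F ^ j - Fintype.card F ^ (j - 1) := by
    intro i hi
    obtain ⟨x, hxD, hxi⟩ : ∃ x ∈ D, x i ≠ 0 := by simpa [hS] using hi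
    obtain ⟨φ, hφ⟩ : ∃ φ : D →ₗ[F] F, φ = (LinearMap.proj i).comp D.subtype := ⟨_, rfl⟩
    have hsurj : Function.Surjective φ := by
      intro a
      refine ⟨(a * (x i)⁻¹) • ⟨x, hxD⟩, ?_⟩
      simp [hφ, mul_assoc, inv_mul_cancel₀ hxi]
    have hrank : Module.finrank F (LinearMap.ker φ) = j - 1 := by
      have h := LinearMap.finrank_range_add_finrank_ker φ
      rw [LinearMap.range_eq_top.2 hsurj, finrank_top, Module.finrank_self, hdim] at h
      omega
    have hker : Fintype.card (LinearMap.ker φ) = Fintype.card F ^ (j - 1) := by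
      rw [← hrank]; exact Module.card_eq_pow_finrank (K := F) (V := LinearMap.ker φ)
    have h0 : (Finset.univ.filter (fun x : D => (x : Fin n → F) i = 0)).card
        = Fintype.card F ^ (j - 1) := by
      rw [← hker, Fintype.card_eq_nat_card]
      have he : Nat.card (LinearMap.ker φ)
          = Nat.card {y : D // (y : Fin n → F) i = 0} := by
        refine Nat.card_congr (Equiv.subtypeEquivRight (fun y => ?_))
        simp [hφ, LinearMap.mem_ker]
      rw [he, Nat.card_eq_fintype_card, Fintype.card_subtype]
    have hsplit : (Finset.univ.filter (fun x : D => (x : Fin n → F) i = 0)).card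
        + (Finset.univ.filter (fun x : D => (x : Fin n → F) i ≠ 0)).card
        = Fintype.card F ^ j := by
      have h := Finset.card_filter_add_card_filter_not
        (s := (Finset.univ : Finset D)) (p := fun x : D => (x : Fin n → F) i = 0)
      simp only [ne_eq, Finset.card_univ] at h ⊢
      rw [h, hcardD]
    rw [h0] at hsplit
    omega
  have hRHS : ∑ i : Fin n, (Finset.univ.filter (fun x : D => (x : Fin n → F) i ≠ 0)).card
      = S.card * (Fintype.card F ^ j - Fintype.card F ^ (j - 1)) := by
    rw [← Finset.sum_subset (Finset.subset_univ S)]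
    · rw [Finset.sum_congr rfl hcoord, Finset.sum_const, smul_eq_mul]
    · intro i _ hiS
      have hno : ¬ ∃ x ∈ D, x i ≠ 0 := by simpa [hS] using hiS
      push_neg at hno
      rw [Finset.card_eq_zero, Finset.filter_eq_empty_iff]
      intro y _
      simpa using hno y y.2
  have key : S.card * (Fintype.card F ^ j - Fintype.card F ^ (j - 1))
      = d * (Fintype.card F ^ j - 1) := by
    rw [← hRHS, ← hswap, hLHS]
  have hle1 : Fintype.card F ^ (j - 1) ≤ Fintype.card F ^ j :=
    Nat.pow_le_pow_right (by omega) (by omega)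
  have hle2 : 1 ≤ Fintype.card F ^ j := Nat.one_le_pow _ _ (by omega)
  have keyQ : (S.card : ℚ) * ((Fintype.card F : ℚ) ^ j - (Fintype.card F : ℚ) ^ (j - 1))
      = (d : ℚ) * ((Fintype.card F : ℚ) ^ j - 1) := by
    have h := congrArg (fun m : ℕ => (m : ℚ)) key
    push_cast [Nat.cast_sub hle1, Nat.cast_sub hle2] at h
    exact h
  have hfact : (Fintype.card F : ℚ) ^ j - (Fintype.card F : ℚ) ^ (j - 1)
      = (Fintype.card F : ℚ) ^ (j - 1) * ((Fintype.card F : ℚ) - 1) := by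
    have hj : j = (j - 1) + 1 := by omega
    rw [hj, pow_succ]
    simp only [Nat.add_sub_cancel]
    ring
  have hne : (Fintype.card F : ℚ) ^ (j - 1) * ((Fintype.card F : ℚ) - 1) ≠ 0 := by
    have hq' : (2 : ℚ) ≤ (Fintype.card F : ℚ) := by exact_mod_cast hq2
    have hpos : (0:ℚ) < (Fintype.card F : ℚ) ^ (j - 1) * ((Fintype.card F : ℚ) - 1) := by
      apply mul_pos (by positivity) (by linarith)
    linarith
  have hsupp : ({i : Fin n | ∃ x ∈ D, x i ≠ 0}).ncard = S.card := by
    rw [hS]; exact ncard_eq_filter_card _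
  rw [hsupp]
  rw [hfact] at keyQ
  rw [eq_div_iff hne]
  linarith [keyQ]
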